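/- arXiv:2307.09552 — 4 statements merged into one kernel-verified Lean document; each statement's English description precedes it below -/
import Mathlib

section
/- Let N₁, N₂, N₃ be independent, identically distributed real-valued random variables. Then the random vector (N₁ + N₃, N₁ + N₂ + 2N₃) has the same distribution as the random vector (N₁ + N₃, 2N₁ + N₂ + N₃). -/
open MeasureTheory ProbabilityTheory Set

theorem stmt_2 {Ω : Type*} [MeasurableSpace Ω] (μ : Measure Ω) [IsProbabilityMeasure μ]
    (N₁ N₂ N₃ : Ω → ℝ) (h₁ : Measurable N₁) (h₂ : Measurable N₂) (h₃ : Measurable N₃)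
    (hindep : iIndepFun ![N₁, N₂, N₃] μ)
    (hid12 : Measure.map N₁ μ = Measure.map N₂ μ)
    (hid13 : Measure.map N₁ μ = Measure.map N₃ μ) :
    Measure.map (fun ω => (N₁ ω + N₃ ω, N₁ ω + N₂ ω + 2 * N₃ ω)) μ
      = Measure.map (fun ω => (N₁ ω + N₃ ω, 2 * N₁ ω + N₂ ω + N₃ ω)) μ := by
  set ν : Measure ℝ := Measure.map N₁ μ with hν
  have hνprob : IsProbabilityMeasure ν := Measure.isProbabilityMeasure_map h₁.aemeasurable
  set T : Ω → (Fin 3 → ℝ) := fun ω i => ![N₁, N₂, N₃] i ω with hT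
  have hmeas : ∀ i, Measurable (![N₁, N₂, N₃] i) := by
    intro i; fin_cases i <;> simpa
  have hTmeas : Measurable T := measurable_pi_lambda _ hmeas
  have hlaw : ∀ i, Measure.map (![N₁, N₂, N₃] i) μ = ν := by
    intro i; fin_cases i <;> simp [hν, ← hid12, ← hid13]
  -- joint law is pi
  have hjoint : Measure.map T μ = Measure.pi (fun _ => ν) := by
    refine (Measure.pi_eq fun s hs => ?_).symm
    rw [Measure.map_apply hTmeas (MeasurableSet.univ_pi hs)]
    have hpre : T ⁻¹' (univ.pi s) = ⋂ i ∈ (Finset.univ : Finset (Fin 3)),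
        ![N₁, N₂, N₃] i ⁻¹' s i := by
      ext ω; simp [hT, Set.mem_pi]
    rw [hpre, hindep.measure_inter_preimage_eq_mul _ (fun i _ => hs i)]
    refine Finset.prod_congr rfl fun i _ => ?_
    rw [← hlaw i, Measure.map_apply (hmeas i) (hs i)]
  -- swap measure preserving
  set e : Fin 3 ≃ Fin 3 := Equiv.swap 0 2 with he
  have hswap : MeasurePreserving (fun x : Fin 3 → ℝ => x ∘ e)
      (Measure.pi (fun _ => ν)) (Measure.pi (fun _ => ν)) := by
    have hm : Measurable (fun x : Fin 3 → ℝ => x ∘ ⇑e) :=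
      measurable_pi_lambda _ fun i => measurable_pi_apply _
    refine ⟨hm, ?_⟩
    refine (Measure.pi_eq fun s hs => ?_).symm
    rw [Measure.map_apply hm (MeasurableSet.univ_pi hs)]
    have hpre : (fun x : Fin 3 → ℝ => x ∘ e) ⁻¹' (univ.pi s)
        = univ.pi (fun j => s (e.symm j)) := by
      ext x
      simp only [Set.mem_preimage, Set.mem_pi, Set.mem_univ, true_implies, Function.comp]
      exact ⟨fun h j => by simpa using h (e.symm j), fun h i => by simpa using h (e i)⟩
    rw [hpre, Measure.pi_pi]
    exact Equiv.prod_comp e.symm fun j => ν (s j)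
  -- define g₁ g₂
  set g₁ : (Fin 3 → ℝ) → ℝ × ℝ := fun x => (x 0 + x 2, x 0 + x 1 + 2 * x 2) with hg₁
  have hg₁m : Measurable g₁ := by
    apply Measurable.prod <;> fun_prop
  have key : Measure.map g₁ (Measure.pi (fun _ : Fin 3 => ν))
      = Measure.map (g₁ ∘ fun x : Fin 3 → ℝ => x ∘ e) (Measure.pi (fun _ => ν)) := by
    rw [← Measure.map_map hg₁m hswap.measurable, hswap.map_eq]
  have hc1 : (fun ω => (N₁ ω + N₃ ω, N₁ ω + N₂ ω + 2 * N₃ ω)) = g₁ ∘ T := by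
    ext ω <;> simp [hg₁, hT]
  have hc2 : (fun ω => (N₁ ω + N₃ ω, 2 * N₁ ω + N₂ ω + N₃ ω))
      = (g₁ ∘ fun x : Fin 3 → ℝ => x ∘ e) ∘ T := by
    ext ω <;> simp [hg₁, hT, he, Function.comp, Equiv.swap_apply_def] <;> ring
  rw [hc1, hc2, ← Measure.map_map hg₁m hTmeas,
    ← Measure.map_map (hg₁m.comp hswap.measurable) hTmeas, hjoint, key]
end

section
/- Let X be a real-valued random variable and U a random variable uniformly distributed on [0,1], independent of X. Let F_{Y|x}(y) := P(Y ≤ y | X = x) be a conditional CDF (a Markov kernel from ℝ to ℝ given by CDFs), and define F⁻¹_{Y|x}(u) := inf{ y : F_{Y|x}(y) ≥ u }. Then the random vector (X, F⁻¹_{Y|X}(U)) has joint distribution equal to the distribution of (X, Y), where (X,Y) is any pair whose conditional distribution of Y given X = x has CDF F_{Y|x}. -/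
open MeasureTheory ProbabilityTheory Set Filter

lemma quantile_le_iff (ν : Measure ℝ) [IsProbabilityMeasure ν] {u : ℝ}
    (hu0 : 0 < u) (hu1 : u < 1) (t : ℝ) :
    sInf {y | u ≤ cdf ν y} ≤ t ↔ u ≤ cdf ν t := by
  set S := {y | u ≤ cdf ν y} with hS
  have hne : S.Nonempty := ((tendsto_cdf_atTop ν).eventually (eventually_ge_nhds hu1)).exists
  have hbdd : BddBelow S := by
    obtain ⟨y0, hy0⟩ := ((tendsto_cdf_atBot ν).eventually (eventually_lt_nhds hu0)).exists
    refine ⟨y0, fun z hz => ?_⟩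
    by_contra h
    push_neg at h
    exact absurd (((monotone_cdf (μ := ν)) h.le).trans_lt hy0) (not_lt.mpr hz)
  have hmem : u ≤ cdf ν (sInf S) := by
    have hsub : Ioi (sInf S) ⊆ S := fun z hz => by
      obtain ⟨w, hwS, hw⟩ := (csInf_lt_iff hbdd hne).mp hz
      exact le_trans hwS ((monotone_cdf (μ := ν)) hw.le)
    have htd : Tendsto (cdf ν) (nhdsWithin (sInf S) (Ioi (sInf S))) (nhds (cdf ν (sInf S))) :=
      ((cdf ν).right_continuous _).mono_left (nhdsWithin_mono _ Ioi_subset_Ici_self)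
    exact ge_of_tendsto htd (eventually_nhdsWithin_of_forall fun z hz => hsub hz)
  constructor
  · intro h
    exact hmem.trans ((monotone_cdf (μ := ν)) h)
  · intro h
    exact csInf_le hbdd h

/-- Conditional inverse-transform sampling: if `U ~ Uniform[0,1]` is independent of `X`,
the law of `X` is the first marginal of `μ`, and `κ` is a Markov kernel disintegrating
`μ` (the law of `(X,Y)`), with conditional CDFs `F x y = κ x (Iic y)`, then
`(X, F⁻¹_{Y|X}(U))` has law `μ`. -/
theorem stmt_10 {Ω : Type*} [MeasurableSpace Ω] (P : Measure Ω) [IsProbabilityMeasure P]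
    (μ : Measure (ℝ × ℝ)) [IsProbabilityMeasure μ]
    (κ : Kernel ℝ ℝ) [IsMarkovKernel κ]
    (hdis : μ = μ.fst ⊗ₘ κ)
    (F : ℝ → ℝ → ℝ) (hF : ∀ x y, F x y = (κ x (Iic y)).toReal)
    (Finv : ℝ → ℝ → ℝ) (hFinv : ∀ x u, Finv x u = sInf {y : ℝ | u ≤ F x y})
    (X U : Ω → ℝ) (hXm : Measurable X) (hUm : Measurable U)
    (hX : Measure.map X P = μ.fst)
    (hU : Measure.map U P = volume.restrict (Icc (0 : ℝ) 1))
    (hXU : IndepFun X U P) :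
    Measure.map (fun ω => (X ω, Finv (X ω) (U ω))) P = μ := by
  classical
  set lam : Measure ℝ := volume.restrict (Icc (0 : ℝ) 1) with hlam
  have hFcdf : ∀ x y, F x y = cdf (κ x) y := fun x y => by
    rw [hF, cdf_eq_real, measureReal_def]
  have hiff : ∀ x u t, u ∈ Ioo (0:ℝ) 1 → (Finv x u ≤ t ↔ u ≤ F x t) := by
    intro x u t hu
    rw [hFinv]
    simp_rw [hFcdf]
    exact quantile_le_iff (κ x) hu.1 hu.2 t
  have hFm : ∀ y, Measurable fun x => F x y := fun y => by
    simp_rw [hF]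
    exact (κ.measurable_coe measurableSet_Iic).ennreal_toReal
  set g : ℝ × ℝ → ℝ := fun p => if p.2 ∈ Ioo (0:ℝ) 1 then Finv p.1 p.2 else 0 with hg
  have hgm : Measurable g := by
    apply measurable_of_Iic
    intro t
    have hset : g ⁻¹' Iic t =
        ({p : ℝ × ℝ | p.2 ∈ Ioo (0:ℝ) 1} ∩ {p : ℝ × ℝ | p.2 ≤ F p.1 t}) ∪
          ({p : ℝ × ℝ | p.2 ∈ Ioo (0:ℝ) 1}ᶜ ∩ {p : ℝ × ℝ | (0:ℝ) ≤ t}) := by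
      ext p
      simp only [mem_preimage, mem_Iic, hg, mem_union, mem_inter_iff, mem_compl_iff,
        mem_setOf_eq]
      by_cases hp : p.2 ∈ Ioo (0:ℝ) 1
      · rw [if_pos hp]
        simp only [hp, true_and, not_true_eq_false, false_and, or_false]
        exact hiff p.1 p.2 t hp
      · rw [if_neg hp]
        simp [hp]
    rw [hset]
    have h1 : MeasurableSet {p : ℝ × ℝ | p.2 ∈ Ioo (0:ℝ) 1} :=
      measurable_snd measurableSet_Ioo
    exact ((h1.inter (measurableSet_le measurable_snd ((hFm t).comp measurable_fst)))).union
      (h1.compl.inter (MeasurableSet.const _))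
  set T : ℝ × ℝ → ℝ × ℝ := fun p => (p.1, g p) with hT
  have hTm : Measurable T := measurable_fst.prodMk hgm
  -- almost everywhere U ∈ Ioo 0 1
  have hnull : lam (Ioo (0:ℝ) 1)ᶜ = 0 := by
    rw [hlam, Measure.restrict_apply measurableSet_Ioo.compl]
    refine measure_mono_null (fun x hx => ?_) (Set.Countable.measure_zero
      ((Set.countable_singleton (1:ℝ)).insert 0) volume)
    obtain ⟨h1, h2, h3⟩ := hx
    simp only [mem_compl_iff, mem_Ioo, not_and, not_lt] at h1
    rcases h2.eq_or_lt with rfl | h0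
    · exact mem_insert _ _
    · exact mem_insert_of_mem _ (le_antisymm h3 (h1 h0))
  have hU01 : ∀ᵐ ω ∂P, U ω ∈ Ioo (0:ℝ) 1 := by
    rw [ae_iff]
    have hmap : Measure.map U P (Ioo (0:ℝ) 1)ᶜ = P (U ⁻¹' (Ioo (0:ℝ) 1)ᶜ) :=
      Measure.map_apply hUm measurableSet_Ioo.compl
    rw [hU] at hmap
    calc P {ω | ¬ U ω ∈ Ioo (0:ℝ) 1} = P (U ⁻¹' (Ioo (0:ℝ) 1)ᶜ) := rfl
      _ = lam (Ioo (0:ℝ) 1)ᶜ := hmap.symm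
      _ = 0 := hnull
  have hae : (fun ω => (X ω, Finv (X ω) (U ω))) =ᵐ[P] fun ω => T (X ω, U ω) :=
    hU01.mono fun ω hω => by simp only [hT, hg]; rw [if_pos hω]
  have hprod : Measure.map (fun ω => (X ω, U ω)) P = (μ.fst).prod lam := by
    rw [(indepFun_iff_map_prod_eq_prod_map_map hXm.aemeasurable hUm.aemeasurable).mp hXU,
      hX, hU]
  rw [Measure.map_congr hae,
    show (fun ω => T (X ω, U ω)) = T ∘ (fun ω => (X ω, U ω)) from rfl,
    ← Measure.map_map hTm (hXm.prodMk hUm), hprod]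
  -- now show map T ((μ.fst).prod lam) = μ
  haveI : IsProbabilityMeasure lam := ⟨by rw [hlam]; simp [Real.volume_Icc]⟩
  haveI : IsProbabilityMeasure (Measure.map T ((μ.fst).prod lam)) :=
    Measure.isProbabilityMeasure_map hTm.aemeasurable
  conv_rhs => rw [hdis]
  haveI : IsProbabilityMeasure (μ.fst ⊗ₘ κ) := by rw [← hdis]; infer_instance
  refine ext_of_generate_finite
    (image2 (· ×ˢ ·) {s : Set ℝ | MeasurableSet s} (range Iic)) ?_ ?_ ?_ ?_
  · have hD : MeasurableSpace.generateFrom (range (Iic : ℝ → Set ℝ)) =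
        (inferInstance : MeasurableSpace ℝ) := by
      conv_rhs => rw [BorelSpace.measurable_eq (α := ℝ)]
      exact (borel_eq_generateFrom_Iic ℝ).symm
    have hCS : IsCountablySpanning (range (Iic : ℝ → Set ℝ)) := by
      refine ⟨fun n => Iic (n : ℝ), fun n => mem_range_self _, ?_⟩
      ext x
      simpa using exists_nat_ge x
    exact (generateFrom_eq_prod MeasurableSpace.generateFrom_measurableSet hD
      isCountablySpanning_measurableSet hCS).symm
  · exact MeasurableSpace.isPiSystem_measurableSet.prod isPiSystem_Iic
  · rintro _ ⟨s, hs, _, ⟨y, rfl⟩, rfl⟩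
    simp only [mem_setOf_eq] at hs
    rw [Measure.map_apply hTm (hs.prod measurableSet_Iic),
      Measure.compProd_apply_prod hs measurableSet_Iic,
      Measure.prod_apply (hTm (hs.prod measurableSet_Iic))]
    have hslice : ∀ x : ℝ, lam (Prod.mk x ⁻¹' (T ⁻¹' s ×ˢ Iic y)) =
        s.indicator (fun x => κ x (Iic y)) x := by
      intro x
      by_cases hx : x ∈ s
      · have hpre : Prod.mk x ⁻¹' (T ⁻¹' s ×ˢ Iic y) = {u : ℝ | g (x, u) ≤ y} := by
          ext u; simp [hT, hx]
        rw [hpre, indicator_of_mem hx]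
        have h01 : 0 ≤ F x y := by rw [hF]; exact ENNReal.toReal_nonneg
        have h1 : F x y ≤ 1 := by
          rw [hF]
          exact ENNReal.toReal_le_of_le_ofReal zero_le_one (by simpa using prob_le_one)
        have haeeq : {u : ℝ | g (x, u) ≤ y} =ᵐ[lam] Iic (F x y) := by
          rw [eventuallyEq_set]
          have hIoo : ∀ᵐ u ∂lam, u ∈ Ioo (0:ℝ) 1 := by
            rw [ae_iff]; exact hnull
          filter_upwards [hIoo] with u hu
          simp only [mem_setOf_eq, mem_Iic, hg, if_pos hu]
          exact hiff x u y hu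
        rw [measure_congr haeeq, hlam, Measure.restrict_apply measurableSet_Iic]
        have : Iic (F x y) ∩ Icc (0:ℝ) 1 = Icc 0 (F x y) := by
          ext u
          simp only [mem_inter_iff, mem_Iic, mem_Icc]
          exact ⟨fun ⟨h1', h2', _⟩ => ⟨h2', h1'⟩, fun ⟨h1', h2'⟩ => ⟨h2', h1', h2'.trans h1⟩⟩
        rw [this, Real.volume_Icc, sub_zero, hF,
          ENNReal.ofReal_toReal (measure_ne_top _ _)]
      · have hpre : Prod.mk x ⁻¹' (T ⁻¹' s ×ˢ Iic y) = ∅ := by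
          ext u; simp [hT, hx]
        rw [hpre, indicator_of_notMem hx]
        simp
    simp_rw [hslice]
    rw [lintegral_indicator hs]
  · simp
end

section
/- Let G = (V, E) be a finite directed acyclic graph and S ⊆ T ⊆ V. Define the latent projection L(G, S) as the directed mixed graph on S containing a directed edge X→Y (for X, Y ∈ S) iff there is a directed path from X to Y in G all of whose intermediate nodes lie in V∖S, and a bidirected edge X↔Y iff there is a node L ∈ V∖S with directed paths from L to X and from L to Y whose intermediate nodes all lie in V∖S. Then the directed part of L(G, S) coincides with the directed part of L(L(G, T), S) restricted to directed-path reachability, i.e., for X, Y ∈ S there is a directed edge X→Y in L(G, S) iff there is a directed path from X to Y in L(G,T) whose intermediate nodes lie in T∖S. -/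
/-- There is a directed path from `x` to `y` (w.r.t. the edge relation `E`)
all of whose intermediate nodes lie in `A`. -/
def DirPathAvoiding {V : Type*} (E : V → V → Prop) (A : Set V) (x y : V) : Prop :=
  ∃ l : List V, (∀ v ∈ l, v ∈ A) ∧ List.Chain E x (l ++ [y])

section Aux

variable {V : Type*} {E : V → V → Prop} {A B : Set V} {x y z : V}

lemma DirPathAvoiding.single (h : E x y) : DirPathAvoiding E A x y :=
  ⟨[], by simp, by simpa [List.Chain, List.isChain_pair] using h⟩

lemma DirPathAvoiding.mono (hAB : A ⊆ B) (h : DirPathAvoiding E A x y) :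
    DirPathAvoiding E B x y := by
  obtain ⟨l, hl, hc⟩ := h
  exact ⟨l, fun v hv => hAB (hl v hv), hc⟩

lemma DirPathAvoiding.cons (hz : z ∈ A) (h : E x z) (h2 : DirPathAvoiding E A z y) :
    DirPathAvoiding E A x y := by
  obtain ⟨l, hl, hc⟩ := h2
  exact ⟨z :: l, by simpa using ⟨hz, hl⟩, List.Chain.cons h hc⟩

lemma DirPathAvoiding.conc (hz : z ∈ A) (h1 : DirPathAvoiding E A x z)
    (h2 : DirPathAvoiding E A z y) : DirPathAvoiding E A x y := by
  obtain ⟨l1, hl1, hc1⟩ := h1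
  obtain ⟨l2, hl2, hc2⟩ := h2
  refine ⟨l1 ++ z :: l2, ?_, ?_⟩
  · intro v hv
    rcases List.mem_append.1 hv with h | h
    · exact hl1 v h
    · rcases List.mem_cons.1 h with rfl | h
      · exact hz
      · exact hl2 v h
  · have heq : (l1 ++ z :: l2) ++ [y] = l1 ++ z :: (l2 ++ [y]) := by simp
    rw [heq, List.Chain, List.isChain_cons_split]
    exact ⟨hc1, hc2⟩

end Aux

/-- Compositionality of the directed part of latent projections: for `S ⊆ T ⊆ V`,
there is a directed edge `x → y` in `L(G,S)` iff there is a directed path from `x`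
to `y` in `L(G,T)` whose intermediate nodes lie in `T \ S`. -/
theorem stmt_11 {V : Type*} [Fintype V] (E : V → V → Prop)
    (hacyclic : ∀ x, ¬ Relation.TransGen E x x)
    (S T : Set V) (hST : S ⊆ T) (x y : V) (hx : x ∈ S) (hy : y ∈ S) :
    DirPathAvoiding E Sᶜ x y ↔
      DirPathAvoiding (fun a b => a ∈ T ∧ b ∈ T ∧ DirPathAvoiding E Tᶜ a b)
        (T \ S) x y := by
  set P : V → V → Prop := fun a b => a ∈ T ∧ b ∈ T ∧ DirPathAvoiding E Tᶜ a b with hP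
  have hyT : y ∈ T := hST hy
  constructor
  · rintro ⟨l, hl, hc⟩
    -- key claim by induction on l (generalizing x)
    have key : ∀ l : List V, (∀ v ∈ l, v ∈ Sᶜ) → ∀ x : V, List.Chain E x (l ++ [y]) →
        ∃ z, DirPathAvoiding E Tᶜ x z ∧
          (z = y ∨ (z ∈ T \ S ∧ DirPathAvoiding P (T \ S) z y)) := by
      intro l
      induction l with
      | nil =>
        intro _ x hc
        simp only [List.nil_append, List.chain_cons] at hc
        exact ⟨y, DirPathAvoiding.single (List.isChain_pair.1 hc), Or.inl rfl⟩
      | cons v l ih =>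
        intro hmem x hc
        have hv : v ∈ Sᶜ := hmem v List.mem_cons_self
        rw [List.cons_append, List.Chain, List.chain_cons] at hc
        obtain ⟨hxv, hc⟩ := hc
        have hmem' : ∀ u ∈ l, u ∈ Sᶜ := fun u hu => hmem u (List.mem_cons_of_mem v hu)
        obtain ⟨z, hvz, hz⟩ := ih hmem' v hc
        by_cases hvT : v ∈ T
        · -- v is a T-node, it becomes an intermediate node of the projected path
          have hvTS : v ∈ T \ S := ⟨hvT, hv⟩
          refine ⟨v, DirPathAvoiding.single hxv, Or.inr ⟨hvTS, ?_⟩⟩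
          rcases hz with rfl | ⟨hzTS, hzy⟩
          · exact DirPathAvoiding.single ⟨hvT, hyT, hvz⟩
          · exact DirPathAvoiding.cons hzTS ⟨hvT, hzTS.1, hvz⟩ hzy
        · -- v is latent w.r.t. T: absorb it into the Tᶜ-path
          exact ⟨z, DirPathAvoiding.cons hvT hxv hvz, hz⟩
    obtain ⟨z, hxz, hz⟩ := key l hl x hc
    have hxT : x ∈ T := hST hx
    rcases hz with rfl | ⟨hzTS, hzy⟩
    · exact DirPathAvoiding.single ⟨hxT, hyT, hxz⟩
    · exact DirPathAvoiding.cons hzTS ⟨hxT, hzTS.1, hxz⟩ hzy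
  · rintro ⟨l, hl, hc⟩
    have key : ∀ l : List V, (∀ v ∈ l, v ∈ T \ S) → ∀ x : V,
        List.Chain P x (l ++ [y]) → DirPathAvoiding E Sᶜ x y := by
      intro l
      induction l with
      | nil =>
        intro _ x hc
        simp only [List.nil_append, List.chain_cons] at hc
        exact (List.isChain_pair.1 hc).2.2.mono (Set.compl_subset_compl.2 hST)
      | cons v l ih =>
        intro hmem x hc
        have hvTS : v ∈ T \ S := hmem v List.mem_cons_self
        rw [List.cons_append, List.Chain, List.chain_cons] at hc
        obtain ⟨⟨-, -, hxv⟩, hc⟩ := hc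
        have h1 : DirPathAvoiding E Sᶜ x v := hxv.mono (Set.compl_subset_compl.2 hST)
        have h2 : DirPathAvoiding E Sᶜ v y :=
          ih (fun u hu => hmem u (List.mem_cons_of_mem v hu)) v hc
        exact DirPathAvoiding.conc hvTS.2 h1 h2
    exact key l hl x hc
end

section
/- Let G be a finite DAG on vertices V and let i, j, k ∈ V with edges i→k and k→j in G. If in the latent projection L(G, V) (equivalently in G) there is no bidirected edge and additionally we require that adding an edge i→j would create, together with i→k, an inducing path between k and j relative to {i}, while adding j→i would create a directed cycle i→k→j→i, then: in any DAG G' on V that agrees with G on the edges i→k and k→j and contains no directed cycle, if additionally k→j must remain unconfounded by i (no common ancestor of k and j through i other than via k), there is no edge between i and j in G'. -/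
/-- Graph-theoretic core of FCI merging: in any DAG `G'` containing the edges `i → k`
and `k → j`, if the edge `k → j` is unconfounded (no node `c ≠ k` is simultaneously an
ancestor of `k` and the start of a directed path to `j` avoiding `k`), then there is
no edge between `i` and `j`: `i → j` would make `i` a confounder of `k → j`, while
`j → i` would create the directed cycle `i → k → j → i`. -/
theorem stmt_17 {V : Type*} [Fintype V] (E' : V → V → Prop)
    (hacyclic : ∀ x, ¬ Relation.TransGen E' x x)
    (i j k : V) (hik : E' i k) (hkj : E' k j)
    (hunconf : ¬ ∃ c, c ≠ k ∧ Relation.TransGen E' c k ∧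
      DirPathAvoiding E' ({k}ᶜ : Set V) c j) :
    ¬ E' i j ∧ ¬ E' j i := by
  constructor
  · intro hij
    have hik' : i ≠ k := by
      rintro rfl; exact hacyclic i (Relation.TransGen.single hik)
    exact hunconf ⟨i, hik', Relation.TransGen.single hik,
      ⟨[], by simp, by simpa [List.Chain, List.isChain_pair] using hij⟩⟩
  · intro hji
    exact hacyclic i ((Relation.TransGen.single hik).tail hkj |>.tail hji)
end
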